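/- For q ∈ (0,1), let D_q be the qubit depolarizing channel mapping a 2×2 complex matrix ρ to (1−q)·ρ + q·(Tr ρ)·I₂/2, and define Q(q,α) := (1−q/2)^α·(q/2)^{1−α} + (1−q/2)^{1−α}·(q/2)^α. Then for every α ∈ (0,1), the supremum of D_α(D_q(ρ)‖D_q(σ)) over all pairs (ρ,σ) of density matrices on ℂ² equals (1/(α−1))·log Q(q,α), and this supremum is attained at ρ = |0⟩⟨0| = !![1,0;0,0] and σ = |1⟩⟨1| = !![0,0;0,1] (whose images under D_q are diag(1−q/2, q/2) and diag(q/2, 1−q/2), respectively). -/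

import Mathlib

open Matrix ComplexOrder

/-- Functional calculus for a matrix: apply `f` to the eigenvalues of a Hermitian matrix
(junk value `0` on non-Hermitian input). -/
noncomputable def matFun {n : Type*} [Fintype n] [DecidableEq n] (f : ℝ → ℝ)
    (A : Matrix n n ℂ) : Matrix n n ℂ :=
  if hA : A.IsHermitian then
    (hA.eigenvectorUnitary : Matrix n n ℂ) *
      Matrix.diagonal (fun i => (f (hA.eigenvalues i) : ℂ)) *
      (hA.eigenvectorUnitary : Matrix n n ℂ)ᴴ
  else 0

/-- Real matrix power `A^t` via functional calculus (with `0^t = 0`). -/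
noncomputable def mrpow {n : Type*} [Fintype n] [DecidableEq n]
    (A : Matrix n n ℂ) (t : ℝ) : Matrix n n ℂ :=
  matFun (fun x => x ^ t) A

/-- Matrix logarithm via functional calculus. -/
noncomputable def mlog {n : Type*} [Fintype n] [DecidableEq n]
    (A : Matrix n n ℂ) : Matrix n n ℂ :=
  matFun Real.log A

/-- The quantum Rényi relative entropy `D_α(ρ‖σ) = (1/(α−1))·log Tr(ρ^α σ^{1−α})`. -/
noncomputable def renyiD {n : Type*} [Fintype n] [DecidableEq n]
    (α : ℝ) (ρ σ : Matrix n n ℂ) : ℝ :=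
  (1 / (α - 1)) * Real.log ((mrpow ρ α * mrpow σ (1 - α)).trace.re)

/-- The quantum relative entropy `D(ρ‖σ) = Tr[ρ(log ρ − log σ)]`. -/
noncomputable def qRelEnt {n : Type*} [Fintype n] [DecidableEq n]
    (ρ σ : Matrix n n ℂ) : ℝ :=
  ((ρ * (mlog ρ - mlog σ)).trace).re

/-- A density matrix: positive semidefinite with unit trace. -/
def IsDensity {n : Type*} [Fintype n] (ρ : Matrix n n ℂ) : Prop :=
  ρ.PosSemidef ∧ ρ.trace = 1

lemma matFun_conj {n : Type*} [Fintype n] [DecidableEq n] (f : ℝ → ℝ)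
    (W : Matrix n n ℂ) (hW : W ∈ Matrix.unitaryGroup n ℂ) (d : n → ℝ) :
    matFun f (W * Matrix.diagonal (fun i => ((d i : ℝ) : ℂ)) * Wᴴ) =
      W * Matrix.diagonal (fun i => ((f (d i) : ℝ) : ℂ)) * Wᴴ := by
  have hA : (W * Matrix.diagonal (fun i => ((d i : ℝ) : ℂ)) * Wᴴ).IsHermitian :=
    Matrix.isHermitian_mul_mul_conjTranspose W
      (Matrix.isHermitian_diagonal_of_self_adjoint _ (by
        ext i; simp [Pi.star_apply, Complex.conj_ofReal]))
  set A := W * Matrix.diagonal (fun i => ((d i : ℝ) : ℂ)) * Wᴴ with hAdef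
  rw [matFun, dif_pos hA]
  set U := (hA.eigenvectorUnitary : Matrix n n ℂ) with hU
  have hUU : Uᴴ * U = 1 := by
    simpa [Matrix.star_eq_conjTranspose] using
      (Matrix.mem_unitaryGroup_iff'.mp hA.eigenvectorUnitary.2)
  have hUU' : U * Uᴴ = 1 := by
    simpa [Matrix.star_eq_conjTranspose] using
      (Matrix.mem_unitaryGroup_iff.mp hA.eigenvectorUnitary.2)
  have hWW : Wᴴ * W = 1 := by
    simpa [Matrix.star_eq_conjTranspose] using (Matrix.mem_unitaryGroup_iff'.mp hW)
  have hWW' : W * Wᴴ = 1 := by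
    simpa [Matrix.star_eq_conjTranspose] using (Matrix.mem_unitaryGroup_iff.mp hW)
  have hspec : A = U * Matrix.diagonal (fun i => ((hA.eigenvalues i : ℝ) : ℂ)) * Uᴴ := by
    have := hA.spectral_theorem
    simpa [Matrix.star_eq_conjTranspose, Function.comp_def] using this
  set M := Uᴴ * W with hM
  have hM1 : Matrix.diagonal (fun i => ((hA.eigenvalues i : ℝ) : ℂ)) * M =
      M * Matrix.diagonal (fun i => ((d i : ℝ) : ℂ)) := by
    have e1 : Uᴴ * A * W = Matrix.diagonal (fun i => ((hA.eigenvalues i : ℝ) : ℂ)) * M := by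
      conv_lhs => rw [hspec]
      simp only [Matrix.mul_assoc]
      rw [← Matrix.mul_assoc Uᴴ U, hUU, Matrix.one_mul, ← hM]
    have e2 : Uᴴ * A * W = M * Matrix.diagonal (fun i => ((d i : ℝ) : ℂ)) := by
      conv_lhs => rw [hAdef]
      simp only [Matrix.mul_assoc]
      rw [hWW, Matrix.mul_one, ← Matrix.mul_assoc, ← hM]
    rw [← e1, e2]
  have hentry : ∀ i j, (f (hA.eigenvalues i) : ℂ) * M i j = M i j * (f (d j) : ℂ) := by
    intro i j
    have h0 : ((hA.eigenvalues i : ℝ) : ℂ) * M i j = M i j * ((d j : ℝ) : ℂ) := by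
      have := congrArg (fun X => X i j) hM1
      simpa [Matrix.diagonal_mul, Matrix.mul_diagonal] using this
    rcases eq_or_ne (M i j) 0 with h | h
    · simp [h]
    · have : ((hA.eigenvalues i : ℝ) : ℂ) = ((d j : ℝ) : ℂ) := by
        rw [mul_comm (M i j) _] at h0
        exact mul_right_cancel₀ h h0
      have : hA.eigenvalues i = d j := by exact_mod_cast this
      rw [this, mul_comm]
  have hM2 : Matrix.diagonal (fun i => ((f (hA.eigenvalues i) : ℝ) : ℂ)) * M =
      M * Matrix.diagonal (fun i => ((f (d i) : ℝ) : ℂ)) := by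
    ext i j
    simp only [Matrix.diagonal_mul, Matrix.mul_diagonal]
    exact hentry i j
  calc U * Matrix.diagonal (fun i => ((f (hA.eigenvalues i) : ℝ) : ℂ)) * Uᴴ
      = U * (Matrix.diagonal (fun i => ((f (hA.eigenvalues i) : ℝ) : ℂ)) * M) * Wᴴ := by
        rw [hM]
        simp only [Matrix.mul_assoc]
        rw [hWW', Matrix.mul_one]
    _ = U * (M * Matrix.diagonal (fun i => ((f (d i) : ℝ) : ℂ))) * Wᴴ := by rw [hM2]
    _ = W * Matrix.diagonal (fun i => ((f (d i) : ℝ) : ℂ)) * Wᴴ := by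
        rw [hM]
        simp only [← Matrix.mul_assoc]
        rw [hUU', Matrix.one_mul]

lemma matFun_diag {n : Type*} [Fintype n] [DecidableEq n] (f : ℝ → ℝ) (d : n → ℝ) :
    matFun f (Matrix.diagonal (fun i => ((d i : ℝ) : ℂ))) =
      Matrix.diagonal (fun i => ((f (d i) : ℝ) : ℂ)) := by
  have := matFun_conj f 1 (one_mem _) d
  simpa using this

lemma trace_conj_re {n : Type*} [Fintype n] [DecidableEq n] (U V : Matrix n n ℂ)
    (hU : U ∈ Matrix.unitaryGroup n ℂ) (hV : V ∈ Matrix.unitaryGroup n ℂ) (d e : n → ℝ) :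
    ((U * Matrix.diagonal (fun i => ((d i : ℝ) : ℂ)) * Uᴴ) *
      (V * Matrix.diagonal (fun i => ((e i : ℝ) : ℂ)) * Vᴴ)).trace.re
      = ∑ i, ∑ j, d i * e j * Complex.normSq ((Uᴴ * V) i j) := by
  have hUU : Uᴴ * U = 1 := by
    simpa [Matrix.star_eq_conjTranspose] using (Matrix.mem_unitaryGroup_iff'.mp hU)
  have hUU' : U * Uᴴ = 1 := by
    simpa [Matrix.star_eq_conjTranspose] using (Matrix.mem_unitaryGroup_iff.mp hU)
  set M := Uᴴ * V with hM
  set Da := Matrix.diagonal (fun i => ((d i : ℝ) : ℂ)) with hDa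
  set De := Matrix.diagonal (fun i => ((e i : ℝ) : ℂ)) with hDe
  have key : (U * Da * Uᴴ) * (V * De * Vᴴ) = U * (Da * (M * (De * Mᴴ))) * Uᴴ := by
    rw [hM]
    simp only [Matrix.conjTranspose_mul, Matrix.conjTranspose_conjTranspose, Matrix.mul_assoc]
    rw [hUU', Matrix.mul_one]
  rw [key, Matrix.trace_mul_cycle, ← Matrix.mul_assoc, hUU, Matrix.one_mul]
  have expand : (Da * (M * (De * Mᴴ))).trace
      = ∑ i, ∑ j, ((d i * e j * Complex.normSq (M i j) : ℝ) : ℂ) := by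
    rw [Matrix.trace]
    congr 1
    ext i
    rw [Matrix.diag]
    rw [hDa, Matrix.diagonal_mul, Matrix.mul_apply, Finset.mul_sum]
    congr 1
    ext j
    rw [hDe, Matrix.diagonal_mul, Matrix.conjTranspose_apply]
    have hms : M i j * star (M i j) = ((Complex.normSq (M i j) : ℝ) : ℂ) :=
      Complex.mul_conj (M i j)
    rw [show M i j * (((e j : ℝ) : ℂ) * star (M i j))
        = ((e j : ℝ) : ℂ) * (M i j * star (M i j)) by ring, hms]
    push_cast
    ring
  rw [expand, Complex.re_sum]
  refine Finset.sum_congr rfl fun i _ => ?_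
  rw [Complex.re_sum]
  refine Finset.sum_congr rfl fun j _ => ?_
  rw [Complex.ofReal_re]

lemma scalar_core (a b α x y : ℝ) (hb : 0 < b) (hba : b < a) (hab : a + b = 1)
    (hα0 : 0 < α) (hα1 : α < 1)
    (hx1 : b ≤ x) (hx2 : x ≤ a) (hy1 : b ≤ y) (hy2 : y ≤ a) :
    a ^ α * b ^ (1-α) + a ^ (1-α) * b ^ α ≤
      x ^ α * y ^ (1-α) + (1-x) ^ α * (1-y) ^ (1-α) := by
  have ha : 0 < a := hb.trans hba
  have hd : 0 < a - b := by linarith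
  have hβ0 : 0 < 1 - α := by linarith
  obtain ⟨s, hs0, hs1, hxe⟩ : ∃ s, 0 ≤ s ∧ s ≤ 1 ∧ x = s * b + (1 - s) * a := by
    refine ⟨(a - x) / (a - b), div_nonneg (by linarith) hd.le,
      (div_le_one hd).mpr (by linarith), ?_⟩
    field_simp
    ring
  obtain ⟨t, ht0, ht1, hye⟩ : ∃ t, 0 ≤ t ∧ t ≤ 1 ∧ y = t * b + (1 - t) * a := by
    refine ⟨(a - y) / (a - b), div_nonneg (by linarith) hd.le,
      (div_le_one hd).mpr (by linarith), ?_⟩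
    field_simp
    ring
  have hxe' : 1 - x = s * a + (1 - s) * b := by linear_combination -hxe - hab
  have hye' : 1 - y = t * a + (1 - t) * b := by linear_combination -hye - hab
  have hcα : ConcaveOn ℝ (Set.Ici (0:ℝ)) fun z : ℝ => z ^ α :=
    Real.concaveOn_rpow hα0.le hα1.le
  have hcβ : ConcaveOn ℝ (Set.Ici (0:ℝ)) fun z : ℝ => z ^ (1-α) :=
    Real.concaveOn_rpow hβ0.le (by linarith)
  have h1 : t * b ^ (1-α) + (1 - t) * a ^ (1-α) ≤ y ^ (1-α) := by
    have := hcβ.2 (Set.mem_Ici.mpr hb.le) (Set.mem_Ici.mpr ha.le) ht0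
      (by linarith : (0:ℝ) ≤ 1 - t) (by ring : t + (1 - t) = 1)
    rw [hye]
    simpa [smul_eq_mul] using this
  have h2 : t * a ^ (1-α) + (1 - t) * b ^ (1-α) ≤ (1 - y) ^ (1-α) := by
    have := hcβ.2 (Set.mem_Ici.mpr ha.le) (Set.mem_Ici.mpr hb.le) ht0
      (by linarith : (0:ℝ) ≤ 1 - t) (by ring : t + (1 - t) = 1)
    rw [hye']
    simpa [smul_eq_mul] using this
  have h3 : s * b ^ α + (1 - s) * a ^ α ≤ x ^ α := by
    have := hcα.2 (Set.mem_Ici.mpr hb.le) (Set.mem_Ici.mpr ha.le) hs0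
      (by linarith : (0:ℝ) ≤ 1 - s) (by ring : s + (1 - s) = 1)
    rw [hxe]
    simpa [smul_eq_mul] using this
  have h4 : s * a ^ α + (1 - s) * b ^ α ≤ (1 - x) ^ α := by
    have := hcα.2 (Set.mem_Ici.mpr ha.le) (Set.mem_Ici.mpr hb.le) hs0
      (by linarith : (0:ℝ) ≤ 1 - s) (by ring : s + (1 - s) = 1)
    rw [hxe']
    simpa [smul_eq_mul] using this
  have hbb : b ^ α * b ^ (1-α) = b := by
    rw [← Real.rpow_add hb]
    norm_num
  have haa : a ^ α * a ^ (1-α) = a := by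
    rw [← Real.rpow_add ha]
    norm_num
  have hQ1 : a ^ α * b ^ (1-α) + a ^ (1-α) * b ^ α ≤ 1 := by
    have g1 : a ^ α * b ^ (1-α) ≤ α * a + (1-α) * b :=
      Real.geom_mean_le_arith_mean2_weighted hα0.le hβ0.le ha.le hb.le (by ring)
    have g2 : a ^ (1-α) * b ^ α ≤ α * b + (1-α) * a := by
      rw [mul_comm]
      exact Real.geom_mean_le_arith_mean2_weighted hα0.le hβ0.le hb.le ha.le (by ring)
    linarith [g1, g2]
  have hP1 : (0:ℝ) ≤ t * b ^ (1-α) + (1 - t) * a ^ (1-α) := by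
    have n1 := Real.rpow_nonneg hb.le (1-α)
    have n2 := Real.rpow_nonneg ha.le (1-α)
    nlinarith
  have hP2 : (0:ℝ) ≤ t * a ^ (1-α) + (1 - t) * b ^ (1-α) := by
    have n1 := Real.rpow_nonneg hb.le (1-α)
    have n2 := Real.rpow_nonneg ha.le (1-α)
    nlinarith
  have l1 : (s * b ^ α + (1 - s) * a ^ α) * (t * b ^ (1-α) + (1 - t) * a ^ (1-α)) ≤
      x ^ α * y ^ (1-α) :=
    mul_le_mul h3 h1 hP1 (Real.rpow_nonneg (by linarith) α)
  have l2 : (s * a ^ α + (1 - s) * b ^ α) * (t * a ^ (1-α) + (1 - t) * b ^ (1-α)) ≤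
      (1 - x) ^ α * (1 - y) ^ (1-α) :=
    mul_le_mul h4 h2 hP2 (Real.rpow_nonneg (by linarith) α)
  have hu : (0:ℝ) ≤ s * t + (1 - s) * (1 - t) := by nlinarith
  have expand_eq : (s * b ^ α + (1 - s) * a ^ α) * (t * b ^ (1-α) + (1 - t) * a ^ (1-α)) +
      (s * a ^ α + (1 - s) * b ^ α) * (t * a ^ (1-α) + (1 - t) * b ^ (1-α))
      = (s * t + (1 - s) * (1 - t)) * 1 +
        (s * (1 - t) + (1 - s) * t) * (a ^ α * b ^ (1-α) + a ^ (1-α) * b ^ α) := by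
    linear_combination (s * t + (1 - s) * (1 - t)) * hbb +
      (s * t + (1 - s) * (1 - t)) * haa + (s * t + (1 - s) * (1 - t)) * hab
  have key : a ^ α * b ^ (1-α) + a ^ (1-α) * b ^ α ≤
      (s * b ^ α + (1 - s) * a ^ α) * (t * b ^ (1-α) + (1 - t) * a ^ (1-α)) +
      (s * a ^ α + (1 - s) * b ^ α) * (t * a ^ (1-α) + (1 - t) * b ^ (1-α)) := by
    rw [expand_eq]
    have h2 : (s * t + (1 - s) * (1 - t)) * 1 +
        (s * (1 - t) + (1 - s) * t) * (a ^ α * b ^ (1-α) + a ^ (1-α) * b ^ α) -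
        (a ^ α * b ^ (1-α) + a ^ (1-α) * b ^ α)
        = (s * t + (1 - s) * (1 - t)) * (1 - (a ^ α * b ^ (1-α) + a ^ (1-α) * b ^ α)) := by
      ring
    linarith [mul_nonneg hu (sub_nonneg.mpr hQ1), h2]
  linarith

/-- for the qubit depolarizing channel `D_q`, and any `α ∈ (0,1)`,
`sup_{ρ,σ} D_α(D_q(ρ)‖D_q(σ)) = (1/(α−1))·log Q(q,α)`, attained at
`ρ = |0⟩⟨0|`, `σ = |1⟩⟨1|`. -/
theorem depolarizing_renyi_sup
    (q : ℝ) (hq : q ∈ Set.Ioo (0 : ℝ) 1)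
    (Dq : Matrix (Fin 2) (Fin 2) ℂ → Matrix (Fin 2) (Fin 2) ℂ)
    (hDq : ∀ ρ, Dq ρ = ((1 - q : ℝ) : ℂ) • ρ +
      ((q : ℝ) : ℂ) • (ρ.trace • ((1 / 2 : ℂ) • (1 : Matrix (Fin 2) (Fin 2) ℂ))))
    (Q : ℝ → ℝ → ℝ)
    (hQ : ∀ q' α, Q q' α = (1 - q' / 2) ^ α * (q' / 2) ^ (1 - α) +
      (1 - q' / 2) ^ (1 - α) * (q' / 2) ^ α)
    (α : ℝ) (hα : α ∈ Set.Ioo (0 : ℝ) 1) :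
    IsGreatest {y : ℝ | ∃ ρ σ : Matrix (Fin 2) (Fin 2) ℂ,
        IsDensity ρ ∧ IsDensity σ ∧ y = renyiD α (Dq ρ) (Dq σ)}
      ((1 / (α - 1)) * Real.log (Q q α)) ∧
    renyiD α (Dq !![1, 0; 0, 0]) (Dq !![0, 0; 0, 1]) =
      (1 / (α - 1)) * Real.log (Q q α) := by
  obtain ⟨hq0, hq1⟩ := hq
  obtain ⟨hα0, hα1⟩ := hα
  have hb : (0:ℝ) < q / 2 := by linarith
  have hba : q / 2 < 1 - q / 2 := by linarith
  have ha : (0:ℝ) < 1 - q / 2 := by linarith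
  have hQpos : 0 < Q q α := by
    rw [hQ]
    have := Real.rpow_pos_of_pos ha α
    have := Real.rpow_pos_of_pos hb (1 - α)
    have := Real.rpow_pos_of_pos ha (1 - α)
    have := Real.rpow_pos_of_pos hb α
    positivity
  -- decomposition of Dq applied to a density matrix
  have decomp : ∀ ρ : Matrix (Fin 2) (Fin 2) ℂ, IsDensity ρ →
      ∃ U : Matrix (Fin 2) (Fin 2) ℂ, ∃ a : Fin 2 → ℝ,
        U ∈ Matrix.unitaryGroup (Fin 2) ℂ ∧
        (∀ i, q / 2 ≤ a i ∧ a i ≤ 1 - q / 2) ∧ a 0 + a 1 = 1 ∧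
        Dq ρ = U * Matrix.diagonal (fun i => ((a i : ℝ) : ℂ)) * Uᴴ := by
    rintro ρ ⟨hpsd, htr⟩
    have hH : ρ.IsHermitian := hpsd.1
    set U := (hH.eigenvectorUnitary : Matrix (Fin 2) (Fin 2) ℂ) with hUdef
    have hUmem : U ∈ Matrix.unitaryGroup (Fin 2) ℂ := hH.eigenvectorUnitary.2
    have hUU : Uᴴ * U = 1 := by
      simpa [Matrix.star_eq_conjTranspose] using (Matrix.mem_unitaryGroup_iff'.mp hUmem)
    have hUU' : U * Uᴴ = 1 := by
      simpa [Matrix.star_eq_conjTranspose] using (Matrix.mem_unitaryGroup_iff.mp hUmem)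
    have hspec : ρ = U * Matrix.diagonal (fun i => ((hH.eigenvalues i : ℝ) : ℂ)) * Uᴴ := by
      simpa [Matrix.star_eq_conjTranspose, Function.comp_def] using hH.spectral_theorem
    have hnn : ∀ i, 0 ≤ hH.eigenvalues i := hpsd.eigenvalues_nonneg
    have hsum : hH.eigenvalues 0 + hH.eigenvalues 1 = 1 := by
      have h1 : ρ.trace = ∑ i, ((hH.eigenvalues i : ℝ) : ℂ) := by
        conv_lhs => rw [hspec]
        rw [Matrix.trace_mul_cycle, hUU, Matrix.one_mul, Matrix.trace_diagonal]
      rw [htr, Fin.sum_univ_two] at h1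
      exact_mod_cast h1.symm
    have hle1 : ∀ i, hH.eigenvalues i ≤ 1 := by
      intro i
      have h := Finset.single_le_sum (fun j (_ : j ∈ Finset.univ) => hnn j)
        (Finset.mem_univ i)
      rw [Fin.sum_univ_two, hsum] at h
      exact h
    refine ⟨U, fun i => (1 - q) * hH.eigenvalues i + q / 2, hUmem, ?_, ?_, ?_⟩
    · intro i
      constructor
      · nlinarith [hnn i]
      · nlinarith [hle1 i]
    · nlinarith [hsum]
    · have hsplit : Matrix.diagonal
          (fun i => ((((1 - q) * hH.eigenvalues i + q / 2 : ℝ)) : ℂ)) =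
          ((1 - q : ℝ) : ℂ) • Matrix.diagonal (fun i => ((hH.eigenvalues i : ℝ) : ℂ)) +
          ((q : ℝ) : ℂ) • ((1 / 2 : ℂ) • (1 : Matrix (Fin 2) (Fin 2) ℂ)) := by
        ext i j
        rcases eq_or_ne i j with h | h
        · subst h
          simp only [Matrix.diagonal_apply_eq, Matrix.add_apply, Matrix.smul_apply,
            Matrix.one_apply_eq, smul_eq_mul]
          push_cast
          ring
        · simp [Matrix.diagonal_apply_ne _ h, Matrix.one_apply_ne h]
      have hmain : U * Matrix.diagonal
          (fun i => ((((1 - q) * hH.eigenvalues i + q / 2 : ℝ)) : ℂ)) * Uᴴ =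
          ((1 - q : ℝ) : ℂ) • ρ + ((q : ℝ) : ℂ) • ((1 / 2 : ℂ) • 1) := by
        rw [hsplit]
        simp only [Matrix.mul_add, Matrix.add_mul, Matrix.mul_smul, Matrix.smul_mul,
          Matrix.mul_one]
        rw [hUU', ← hspec]
      rw [hDq ρ, htr, one_smul, hmain]
  -- the key trace lower bound
  have core : ∀ ρ σ : Matrix (Fin 2) (Fin 2) ℂ, IsDensity ρ → IsDensity σ →
      Q q α ≤ (mrpow (Dq ρ) α * mrpow (Dq σ) (1 - α)).trace.re := by
    intro ρ σ hρ hσ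
    obtain ⟨U, a, hU, haI, hasum, hAeq⟩ := decomp ρ hρ
    obtain ⟨V, b, hV, hbI, hbsum, hBeq⟩ := decomp σ hσ
    have hra : mrpow (Dq ρ) α = U * Matrix.diagonal (fun i => ((a i ^ α : ℝ) : ℂ)) * Uᴴ := by
      rw [hAeq]
      exact matFun_conj (fun x => x ^ α) U hU a
    have hrb : mrpow (Dq σ) (1 - α) =
        V * Matrix.diagonal (fun i => ((b i ^ (1 - α) : ℝ) : ℂ)) * Vᴴ := by
      rw [hBeq]
      exact matFun_conj (fun x => x ^ (1 - α)) V hV b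
    rw [hra, hrb, trace_conj_re U V hU hV]
    have hMmem : Uᴴ * V ∈ Matrix.unitaryGroup (Fin 2) ℂ := by
      rw [← Matrix.star_eq_conjTranspose]
      exact mul_mem (Unitary.star_mem hU) hV
    set M := Uᴴ * V with hM
    have hMM' : M * Mᴴ = 1 := by
      simpa [Matrix.star_eq_conjTranspose] using (Matrix.mem_unitaryGroup_iff.mp hMmem)
    have hMM : Mᴴ * M = 1 := by
      simpa [Matrix.star_eq_conjTranspose] using (Matrix.mem_unitaryGroup_iff'.mp hMmem)
    have row : ∀ i, Complex.normSq (M i 0) + Complex.normSq (M i 1) = 1 := by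
      intro i
      have h := congrArg (fun X : Matrix (Fin 2) (Fin 2) ℂ => X i i) hMM'
      simp only [Matrix.mul_apply, Matrix.one_apply_eq, Fin.sum_univ_two,
        Matrix.conjTranspose_apply] at h
      have h2 : ((Complex.normSq (M i 0) + Complex.normSq (M i 1) : ℝ) : ℂ) = 1 := by
        push_cast
        rw [← Complex.mul_conj, ← Complex.mul_conj]
        exact h
      exact_mod_cast h2
    have col : ∀ j, Complex.normSq (M 0 j) + Complex.normSq (M 1 j) = 1 := by
      intro j
      have h := congrArg (fun X : Matrix (Fin 2) (Fin 2) ℂ => X j j) hMM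
      simp only [Matrix.mul_apply, Matrix.one_apply_eq, Fin.sum_univ_two,
        Matrix.conjTranspose_apply] at h
      rw [mul_comm (star (M 0 j)) _, mul_comm (star (M 1 j)) _] at h
      have h2 : ((Complex.normSq (M 0 j) + Complex.normSq (M 1 j) : ℝ) : ℂ) = 1 := by
        push_cast
        rw [← Complex.mul_conj, ← Complex.mul_conj]
        exact h
      exact_mod_cast h2
    have hc0 : 0 ≤ Complex.normSq (M 0 0) := Complex.normSq_nonneg _
    have hc1 : Complex.normSq (M 0 0) ≤ 1 := by
      have := row 0
      have := Complex.normSq_nonneg (M 0 1)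
      linarith
    have h01 : Complex.normSq (M 0 1) = 1 - Complex.normSq (M 0 0) := by
      have := row 0; linarith
    have h10 : Complex.normSq (M 1 0) = 1 - Complex.normSq (M 0 0) := by
      have := col 0; linarith
    have h11 : Complex.normSq (M 1 1) = Complex.normSq (M 0 0) := by
      have := row 1; rw [h10] at this; linarith
    simp only [Fin.sum_univ_two]
    rw [h01, h10, h11]
    have S1 : Q q α ≤ a 0 ^ α * b 0 ^ (1 - α) + a 1 ^ α * b 1 ^ (1 - α) := by
      have h := scalar_core (1 - q / 2) (q / 2) α (a 0) (b 0) hb hba (by ring) hα0 hα1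
        (haI 0).1 (haI 0).2 (hbI 0).1 (hbI 0).2
      have e1 : 1 - a 0 = a 1 := by linarith
      have e2 : 1 - b 0 = b 1 := by linarith
      rw [e1, e2] at h
      rw [hQ]
      exact h
    have S2 : Q q α ≤ a 0 ^ α * b 1 ^ (1 - α) + a 1 ^ α * b 0 ^ (1 - α) := by
      have h := scalar_core (1 - q / 2) (q / 2) α (a 0) (b 1) hb hba (by ring) hα0 hα1
        (haI 0).1 (haI 0).2 (hbI 1).1 (hbI 1).2
      have e1 : 1 - a 0 = a 1 := by linarith
      have e2 : 1 - b 1 = b 0 := by linarith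
      rw [e1, e2] at h
      rw [hQ]
      exact h
    nlinarith [mul_le_mul_of_nonneg_left S1 hc0,
      mul_le_mul_of_nonneg_left S2 (by linarith : (0:ℝ) ≤ 1 - Complex.normSq (M 0 0))]
  -- attainment
  have hρ0 : IsDensity (!![1, 0; 0, 0] : Matrix (Fin 2) (Fin 2) ℂ) := by
    constructor
    · have hdg : (!![(1:ℂ), 0; 0, 0]) = Matrix.diagonal ![1, 0] := by
        ext i j
        fin_cases i <;> fin_cases j <;> simp [Matrix.diagonal]
      rw [hdg]
      refine Matrix.posSemidef_diagonal_iff.mpr fun i => ?_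
      fin_cases i
      · exact zero_le_one
      · exact le_refl 0
    · simp [Matrix.trace_fin_two]
  have hσ0 : IsDensity (!![0, 0; 0, 1] : Matrix (Fin 2) (Fin 2) ℂ) := by
    constructor
    · have hdg : (!![(0:ℂ), 0; 0, 1]) = Matrix.diagonal ![0, 1] := by
        ext i j
        fin_cases i <;> fin_cases j <;> simp [Matrix.diagonal]
      rw [hdg]
      refine Matrix.posSemidef_diagonal_iff.mpr fun i => ?_
      fin_cases i
      · exact le_refl 0
      · exact zero_le_one
    · simp [Matrix.trace_fin_two]
  have hD0 : Dq !![1, 0; 0, 0] =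
      Matrix.diagonal (fun i => ((![1 - q / 2, q / 2] i : ℝ) : ℂ)) := by
    rw [hDq]
    have htr0 : (!![(1:ℂ), 0; 0, 0]).trace = 1 := by simp [Matrix.trace_fin_two]
    rw [htr0, one_smul]
    ext i j
    fin_cases i <;> fin_cases j <;>
      simp [Matrix.one_apply, Matrix.diagonal] <;> push_cast <;> ring
  have hD1 : Dq !![0, 0; 0, 1] =
      Matrix.diagonal (fun i => ((![q / 2, 1 - q / 2] i : ℝ) : ℂ)) := by
    rw [hDq]
    have htr1 : (!![(0:ℂ), 0; 0, 1]).trace = 1 := by simp [Matrix.trace_fin_two]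
    rw [htr1, one_smul]
    ext i j
    fin_cases i <;> fin_cases j <;>
      simp [Matrix.one_apply, Matrix.diagonal] <;> push_cast <;> ring
  have hval : (mrpow (Dq !![1, 0; 0, 0]) α * mrpow (Dq !![0, 0; 0, 1]) (1 - α)).trace.re
      = Q q α := by
    rw [hD0, hD1]
    unfold mrpow
    rw [matFun_diag, matFun_diag, Matrix.diagonal_mul_diagonal, Matrix.trace_diagonal,
      Fin.sum_univ_two]
    simp only [Matrix.cons_val_zero, Matrix.cons_val_one, Matrix.head_cons]
    rw [← Complex.ofReal_mul, ← Complex.ofReal_mul, ← Complex.ofReal_add, Complex.ofReal_re,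
      hQ]
    ring
  have hatt : renyiD α (Dq !![1, 0; 0, 0]) (Dq !![0, 0; 0, 1]) =
      (1 / (α - 1)) * Real.log (Q q α) := by
    rw [renyiD, hval]
  refine ⟨⟨⟨!![1, 0; 0, 0], !![0, 0; 0, 1], hρ0, hσ0, hatt.symm⟩, ?_⟩, hatt⟩
  rintro y ⟨ρ, σ, hρ, hσ, rfl⟩
  have hT := core ρ σ hρ hσ
  rw [renyiD]
  have hlog : Real.log (Q q α) ≤
      Real.log ((mrpow (Dq ρ) α * mrpow (Dq σ) (1 - α)).trace.re) :=
    Real.log_le_log hQpos hT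
  have hneg : 1 / (α - 1) ≤ 0 := by
    apply div_nonpos_of_nonneg_of_nonpos
    · norm_num
    · linarith
  exact mul_le_mul_of_nonpos_left hlog hneg
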